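/- Let G₁ be a simple graph on vertex set {1,…,n} and let G₂ be its complement. Then for every d ≥ 0, every element of the left ideal E_n·E_{G₁}⁺ that is homogeneous of degree d pairs to zero under ⟨·,·⟩ with every element of E_{G₂} homogeneous of degree d. (Here E_n·E_{G₁}⁺ denotes the span of products P·h with P ∈ E_n and h ∈ E_{G₁}⁺.) -/

import Mathlib

open scoped TensorProduct

namespace FK

/-- Defining relations of the Fomin–Kirillov algebra `E n`, with generators indexed by
ordered pairs `(i, j)`; we also impose `x_{ii} = 0` and the antisymmetry `x_{ji} = -x_{ij}`,
so that the generators of the algebra are the `x_{ij}` for `i < j`. -/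
inductive Rel (n : ℕ) : FreeAlgebra ℚ (Fin n × Fin n) → FreeAlgebra ℚ (Fin n × Fin n) → Prop
  | diag (i : Fin n) : Rel n (FreeAlgebra.ι ℚ (i, i)) 0
  | antisymm (i j : Fin n) (hij : i ≠ j) :
      Rel n (FreeAlgebra.ι ℚ (j, i)) (-FreeAlgebra.ι ℚ (i, j))
  | square (i j : Fin n) (hij : i ≠ j) :
      Rel n (FreeAlgebra.ι ℚ (i, j) * FreeAlgebra.ι ℚ (i, j)) 0
  | comm (i j k l : Fin n) (h : List.Nodup [i, j, k, l]) :
      Rel n (FreeAlgebra.ι ℚ (i, j) * FreeAlgebra.ι ℚ (k, l))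
        (FreeAlgebra.ι ℚ (k, l) * FreeAlgebra.ι ℚ (i, j))
  | cyclic (i j k : Fin n) (h : List.Nodup [i, j, k]) :
      Rel n (FreeAlgebra.ι ℚ (i, j) * FreeAlgebra.ι ℚ (j, k)
        + FreeAlgebra.ι ℚ (j, k) * FreeAlgebra.ι ℚ (k, i)
        + FreeAlgebra.ι ℚ (k, i) * FreeAlgebra.ι ℚ (i, j)) 0

/-- The Fomin–Kirillov algebra `E n`. -/
abbrev E (n : ℕ) : Type := RingQuot (Rel n)

/-- The generator `x_{ij}` of `E n`. -/
noncomputable def x (n : ℕ) (i j : Fin n) : E n :=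
  RingQuot.mkAlgHom ℚ (Rel n) (FreeAlgebra.ι ℚ (i, j))

/-- The product of generators `x_{i₁j₁} ⋯ x_{i_d j_d}` given by a list of pairs. -/
noncomputable def word (n : ℕ) (l : List (Fin n × Fin n)) : E n :=
  (l.map fun p => x n p.1 p.2).prod

/-- The degree-`d` component of `E n`: the span of products of `d` generators. -/
def degSpan (n : ℕ) (d : ℕ) : Submodule ℚ (E n) :=
  Submodule.span ℚ {y | ∃ l : List (Fin n × Fin n),
    (∀ p ∈ l, p.1 ≠ p.2) ∧ l.length = d ∧ y = word n l}

/-- The Fomin–Kirillov algebra of a graph `G`: the subalgebra of `E n` generated by the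
`x_{ij}` with `{i,j}` an edge of `G`. -/
def EG (n : ℕ) (G : SimpleGraph (Fin n)) : Subalgebra ℚ (E n) :=
  Algebra.adjoin ℚ {y | ∃ i j : Fin n, G.Adj i j ∧ y = x n i j}

/-- The degree-`d` component `E_G^d = E_G ∩ E_n^d`. -/
def EGdeg (n : ℕ) (G : SimpleGraph (Fin n)) (d : ℕ) : Submodule ℚ (E n) :=
  (EG n G).toSubmodule ⊓ degSpan n d

/-- The positive-degree part `E_G⁺` of `E_G`. -/
def EGplus (n : ℕ) (G : SimpleGraph (Fin n)) : Submodule ℚ (E n) :=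
  ⨆ d : ℕ, ⨆ _ : 1 ≤ d, EGdeg n G d


/-- The defining properties of the operator `Δ_{ab} : E n → E n` (relative to the
algebra automorphism `σ` induced by the transposition `(a b)`): it kills `1`, takes the
prescribed values on generators, and satisfies the twisted Leibniz rule. -/
def IsDelta (n : ℕ) (σ : E n →ₐ[ℚ] E n) (a b : Fin n) (D : E n →ₗ[ℚ] E n) : Prop :=
  D 1 = 0 ∧
  (∀ i j : Fin n, i ≠ j →
    D (x n i j) = if i = a ∧ j = b then 1 else if i = b ∧ j = a then -1 else 0) ∧
  (∀ P Q : E n, D (P * Q) = D P * Q + σ P * D Q)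

/-- The left ideal `E_n · E_G⁺` of `E n`. -/
def leftIdeal (n : ℕ) (G : SimpleGraph (Fin n)) : Submodule ℚ (E n) :=
  Submodule.span ℚ {y | ∃ p : E n, ∃ h ∈ EGplus n G, y = p * h}


/-- Augmentation sending every generator to `0`. -/
noncomputable def eps (n : ℕ) : E n →ₐ[ℚ] ℚ :=
  RingQuot.liftAlgHom ℚ ⟨FreeAlgebra.lift ℚ (fun _ => (0:ℚ)), by
    intro a b r
    induction r <;> simp⟩

theorem eps_x (n : ℕ) (i j : Fin n) : eps n (x n i j) = 0 := by
  simp [eps, x, RingQuot.liftAlgHom_mkAlgHom_apply]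

theorem delta_ker (n : ℕ) (Δ : E n →ₐ[ℚ] Module.End ℚ (E n))
    (σ : Fin n → Fin n → (E n →ₐ[ℚ] E n))
    (hΔ : ∀ a b : Fin n, a ≠ b → IsDelta n (σ a b) a b (Δ (x n a b)))
    (G₁ : SimpleGraph (Fin n)) (a b : Fin n) (hab : G₁.Adj a b)
    (Q : E n) (hQ : Q ∈ EG n G₁ᶜ) : Δ (x n a b) Q = 0 := by
  obtain ⟨h1, hgen, hmul⟩ := hΔ a b hab.ne
  induction hQ using Algebra.adjoin_induction with
  | mem q hq =>
    obtain ⟨i, j, hij, rfl⟩ := hq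
    rw [hgen i j hij.ne]
    have h₁ : ¬(i = a ∧ j = b) := by rintro ⟨rfl, rfl⟩; exact hij.2 hab
    have h₂ : ¬(i = b ∧ j = a) := by rintro ⟨rfl, rfl⟩; exact hij.2 hab.symm
    rw [if_neg h₁, if_neg h₂]
  | algebraMap r =>
    have : (algebraMap ℚ (E n) r) = r • (1 : E n) := by
      simp [Algebra.algebraMap_eq_smul_one]
    rw [this, map_smul, h1, smul_zero]
  | add p q _ _ hp hq => rw [map_add, hp, hq, add_zero]
  | mul p q _ _ hp hq => rw [hmul, hp, hq, zero_mul, mul_zero, add_zero]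

theorem delta_eps (n : ℕ) (Δ : E n →ₐ[ℚ] Module.End ℚ (E n))
    (σ : Fin n → Fin n → (E n →ₐ[ℚ] E n))
    (hΔ : ∀ a b : Fin n, a ≠ b → IsDelta n (σ a b) a b (Δ (x n a b)))
    (G₁ : SimpleGraph (Fin n))
    (Q : E n) (hQ : Q ∈ EG n G₁ᶜ)
    (h : E n) (hh : h ∈ EG n G₁) : Δ h Q = eps n h • Q := by
  induction hh using Algebra.adjoin_induction with
  | mem q hq =>
    obtain ⟨i, j, hij, rfl⟩ := hq
    rw [delta_ker n Δ σ hΔ G₁ i j hij Q hQ, eps_x, zero_smul]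
  | algebraMap r =>
    rw [AlgHom.commutes, AlgHom.commutes, Module.algebraMap_end_apply]
    norm_num
  | add p q _ _ hp hq =>
    rw [map_add Δ, LinearMap.add_apply, hp, hq, map_add (eps n), add_smul]
  | mul p q _ _ hp hq =>
    rw [map_mul Δ, Module.End.mul_apply, hq, map_smul, hp, map_mul (eps n), smul_smul,
      mul_comm]

theorem eps_plus (n : ℕ) (G₁ : SimpleGraph (Fin n))
    (h : E n) (hh : h ∈ EGplus n G₁) : eps n h = 0 ∧ h ∈ EG n G₁ := by
  have key : EGplus n G₁ ≤ (RingHom.ker (eps n).toRingHom).restrictScalars ℚ ⊓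
      (EG n G₁).toSubmodule := by
    refine iSup_le fun e => iSup_le fun he => le_inf ?_ inf_le_left
    refine le_trans inf_le_right ?_
    rw [degSpan, Submodule.span_le]
    rintro y ⟨l, -, hlen, rfl⟩
    obtain ⟨p, t, rfl⟩ : ∃ p t, l = p :: t := by
      cases l with
      | nil => simp at hlen; omega
      | cons p t => exact ⟨p, t, rfl⟩
    simp only [SetLike.mem_coe, Submodule.restrictScalars_mem, RingHom.mem_ker]
    show eps n (word n (p :: t)) = 0
    rw [word, List.map_cons, List.prod_cons, map_mul, eps_x, zero_mul]
  have := key hh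
  exact ⟨this.1, this.2⟩

/-- let `G₁` be a graph on `n` vertices and `G₂ = G₁ᶜ` its complement.  Every
element of the left ideal `E_n·E_{G₁}⁺` homogeneous of degree `d` pairs to zero under
`⟨·,·⟩` with every element of `E_{G₂}` homogeneous of degree `d`; equivalently
`Δ_P(Q) = 0` for all such `P`, `Q`, where `P ↦ Δ_P` is the algebra homomorphism
`E n → End(E n)` extending the operators `Δ_{ab}`. -/
theorem stmt4 (n : ℕ) (hn : 1 ≤ n)
    (σ : Fin n → Fin n → (E n →ₐ[ℚ] E n))
    (hσ : ∀ a b i j : Fin n,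
      σ a b (x n i j) = x n (Equiv.swap a b i) (Equiv.swap a b j))
    (Δ : E n →ₐ[ℚ] Module.End ℚ (E n))
    (hΔ : ∀ a b : Fin n, a ≠ b → IsDelta n (σ a b) a b (Δ (x n a b)))
    (G₁ : SimpleGraph (Fin n)) (d : ℕ)
    (P : E n) (hP : P ∈ leftIdeal n G₁ ⊓ degSpan n d)
    (Q : E n) (hQ : Q ∈ EGdeg n G₁ᶜ d) :
    Δ P Q = 0 := by
  have hP' := hP.1
  have hQ' := hQ.1
  let L : E n →ₗ[ℚ] E n :=
    { toFun := fun R => Δ R Q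
      map_add' := by
        intro a b
        show Δ (a + b) Q = Δ a Q + Δ b Q
        rw [map_add Δ, LinearMap.add_apply]
      map_smul' := by
        intro c a
        show Δ (c • a) Q = c • Δ a Q
        have h := Δ.toLinearMap.map_smul c a
        rw [AlgHom.toLinearMap_apply, AlgHom.toLinearMap_apply] at h
        rw [h, LinearMap.smul_apply] }
  have key : leftIdeal n G₁ ≤ LinearMap.ker L := by
    rw [leftIdeal, Submodule.span_le]
    rintro y ⟨p, h, hh, rfl⟩
    obtain ⟨heps, hmem⟩ := eps_plus n G₁ h hh
    simp only [SetLike.mem_coe, LinearMap.mem_ker, LinearMap.coe_mk, AddHom.coe_mk, L]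
    rw [map_mul Δ, Module.End.mul_apply, delta_eps n Δ σ hΔ G₁ Q hQ' h hmem, heps,
      zero_smul, map_zero]
  exact key hP' 

end FK
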